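/- Let g : X → X be continuous on a compact metric space, μ a finite g-invariant Borel measure on X, and x a point in the topological support of μ. Then for every δ > 0 the set R_δ(x) := {n > 0 : B_δ(x) ∩ gⁿ(B_δ(x)) ≠ ∅} has bounded gaps: there exists s ∈ ℕ such that for every r ∈ ℕ there is j ∈ {0,…,s} with r + j ∈ R_δ(x). -/

import Mathlib

open MeasureTheory

/-- If `x` lies in the topological support of a finite invariant measure
of a continuous map `g`, then every return-time set `R_δ(x)` has bounded gaps. -/
theorem returns_syndetic_of_support {X : Type*} [MetricSpace X] [CompactSpace X]
    [MeasurableSpace X] [BorelSpace X]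
    (g : X → X) (hg : Continuous g) (μ : Measure X) [IsFiniteMeasure μ]
    (hinv : ∀ A : Set X, MeasurableSet A → μ (g ⁻¹' A) = μ A)
    (x : X) (hsupp : ∀ U : Set X, IsOpen U → x ∈ U → 0 < μ U) :
    ∀ δ > 0, ∃ s : ℕ, ∀ r : ℕ, ∃ j ≤ s, 0 < r + j ∧
      (Metric.closedBall x δ ∩ g^[r + j] '' Metric.closedBall x δ).Nonempty := by
  intro δ hδ
  set U : Set X := Metric.ball x δ with hUdef
  have hUopen : IsOpen U := Metric.isOpen_ball
  have hUmeas : MeasurableSet U := hUopen.measurableSet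
  have hc : 0 < μ U := hsupp U hUopen (Metric.mem_ball_self hδ)
  -- invariance for iterates
  have hinv' : ∀ n : ℕ, ∀ A : Set X, MeasurableSet A → μ (g^[n] ⁻¹' A) = μ A := by
    intro n
    induction n with
    | zero => intro A _; simp
    | succ n ih =>
      intro A hA
      rw [Function.iterate_succ, Set.preimage_comp, hinv _ (hA.preimage (hg.iterate n).measurable),
        ih A hA]
  have hPmeas : ∀ k : ℕ, MeasurableSet (g^[k] ⁻¹' U) :=
    fun k => hUmeas.preimage (hg.iterate k).measurable
  set A : ℕ → Set X := fun n => ⋃ k ≤ n, g^[k] ⁻¹' U with hA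
  have hAmeas : ∀ n, MeasurableSet (A n) :=
    fun n => MeasurableSet.iUnion fun k => MeasurableSet.iUnion fun _ => hPmeas k
  have hAmono : Monotone A := by
    intro m n hmn
    exact Set.iUnion₂_mono' fun k hk => ⟨k, hk.trans hmn, le_rfl⟩
  set F : Set X := ⋃ n, g^[n] ⁻¹' U with hF
  have hFA : F = ⋃ n, A n := by
    apply Set.Subset.antisymm
    · exact Set.iUnion_mono' fun n => ⟨n, fun y hy => Set.mem_iUnion₂.mpr ⟨n, le_rfl, hy⟩⟩
    · exact Set.iUnion_subset fun n =>
        Set.iUnion₂_subset fun k _ => Set.subset_iUnion (fun m => g^[m] ⁻¹' U) k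
  have hFsup : μ F = ⨆ n, μ (A n) := by
    rw [hFA]
    exact Directed.measure_iUnion (hAmono.directed_le)
  have hFne : μ F ≠ ⊤ := measure_ne_top μ F
  have hcU : μ U ≤ μ F := by
    apply measure_mono
    exact Set.subset_iUnion_of_subset 0 (by simp)
  have hFpos : μ F ≠ 0 := fun h => hc.ne' (le_antisymm (h ▸ hcU) zero_le)
  -- choose N with μ F - μ U < μ (A N)
  have hlt : μ F - μ U < ⨆ n, μ (A n) := by
    rw [← hFsup]
    exact ENNReal.sub_lt_self hFne hFpos hc.ne'
  obtain ⟨N, hN⟩ := lt_iSup_iff.mp hlt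
  refine ⟨N + 1, fun r => ?_⟩
  -- the key positivity
  have key : (g^[r + N + 1] ⁻¹' U ∩ A N).Nonempty := by
    rw [Set.nonempty_iff_ne_empty]
    intro hemp
    have h0 : μ (g^[r + N + 1] ⁻¹' U ∩ A N) = 0 := by rw [hemp]; simp
    have hsplit : μ (g^[r + N + 1] ⁻¹' U ∩ A N) + μ (g^[r + N + 1] ⁻¹' U \ A N)
        = μ (g^[r + N + 1] ⁻¹' U) := measure_inter_add_diff _ (hAmeas N)
    have hPF : g^[r + N + 1] ⁻¹' U \ A N ⊆ F \ A N := by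
      apply Set.diff_subset_diff_left
      exact Set.subset_iUnion (fun m => g^[m] ⁻¹' U) (r + N + 1)
    have hdiff : μ (F \ A N) = μ F - μ (A N) := by
      apply measure_diff _ (hAmeas N).nullMeasurableSet (measure_ne_top μ (A N))
      rw [hFA]; exact Set.subset_iUnion A N
    have hANF : μ (A N) ≤ μ F := by rw [hFA]; exact measure_mono (Set.subset_iUnion A N)
    have hFlt : μ F < μ U + μ (A N) := by
      calc μ F ≤ μ U + (μ F - μ U) := le_add_tsub
        _ < μ U + μ (A N) := ENNReal.add_lt_add_left (measure_ne_top μ U) hN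
    have hsmall : μ F - μ (A N) < μ U := (ENNReal.sub_lt_iff_lt_right (measure_ne_top μ (A N)) hANF).mpr
      hFlt
    have : μ (g^[r + N + 1] ⁻¹' U) < μ U := by
      calc μ (g^[r + N + 1] ⁻¹' U) = μ (g^[r + N + 1] ⁻¹' U ∩ A N)
            + μ (g^[r + N + 1] ⁻¹' U \ A N) := hsplit.symm
        _ = μ (g^[r + N + 1] ⁻¹' U \ A N) := by rw [h0, zero_add]
        _ ≤ μ (F \ A N) := measure_mono hPF
        _ = μ F - μ (A N) := hdiff
        _ < μ U := hsmall
    rw [hinv' (r + N + 1) U hUmeas] at this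
    exact lt_irrefl _ this
  obtain ⟨y, hy1, hy2⟩ := key
  simp only [hA, Set.mem_iUnion] at hy2
  obtain ⟨k, hk, hyk⟩ := hy2
  refine ⟨N + 1 - k, by omega, by omega, ⟨g^[r + N + 1] y, ?_, ?_⟩⟩
  · exact Metric.ball_subset_closedBall hy1
  · refine ⟨g^[k] y, Metric.ball_subset_closedBall hyk, ?_⟩
    rw [← Function.iterate_add_apply]
    congr 1
    omega
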